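/- Let X and Y be i.i.d. nonnegative random variables with survival function F̄, φ ≥ 0 a weight, and ψ(x) = ∫₀ˣ φ(t) dt. Then 2 E_φ^w(X) ≥ E[|ψ(X) − ψ(Y)|], and consequently 2 E_φ^w(X) ≥ E[|ψ(X) − E[ψ(X)]|]. -/

import Mathlib

open MeasureTheory Set

lemma mylog (u : ℝ) (h0 : 0 ≤ u) (h1 : u ≤ 1) : u * (1 - u) ≤ u * |Real.log u| := by
  rcases eq_or_lt_of_le h0 with h|h
  · simp [← h]
  · have hlog : Real.log u ≤ u - 1 := Real.log_le_sub_one_of_pos h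
    have hln : Real.log u ≤ 0 := Real.log_nonpos h0 h1
    rw [abs_of_nonpos hln]
    nlinarith

lemma key_aux (φ : ℝ → ℝ) (hφm : Measurable φ) (hφ : ∀ x, 0 ≤ φ x)
    (ψ : ℝ → ℝ) (hψ : ∀ x, ψ x = ∫ t in (0:ℝ)..x, φ t)
    (a b : ℝ) (ha : 0 ≤ a) (hab : a ≤ b) :
    ENNReal.ofReal |ψ a - ψ b| ≤ ∫⁻ t in Ioc a b, ENNReal.ofReal (φ t) := by
  by_cases hIa : IntegrableOn φ (Ioc 0 a) volume
  · by_cases hIab : IntegrableOn φ (Ioc a b) volume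
    · -- honest case
      have hIb : IntegrableOn φ (Ioc 0 b) volume := by
        rw [← Set.Ioc_union_Ioc_eq_Ioc ha hab]; exact hIa.union hIab
      have h0a : IntervalIntegrable φ volume 0 a := by
        rwa [intervalIntegrable_iff_integrableOn_Ioc_of_le ha]
      have h0b : IntervalIntegrable φ volume 0 b := by
        rwa [intervalIntegrable_iff_integrableOn_Ioc_of_le (ha.trans hab)]
      have hsub : ψ b - ψ a = ∫ t in Ioc a b, φ t := by
        rw [hψ, hψ, intervalIntegral.integral_interval_sub_left h0b h0a,
          intervalIntegral.integral_of_le hab]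
      have hnn : (0:ℝ) ≤ ∫ t in Ioc a b, φ t :=
        setIntegral_nonneg measurableSet_Ioc fun t _ => hφ t
      have habs : |ψ a - ψ b| = ∫ t in Ioc a b, φ t := by
        rw [abs_sub_comm, hsub, abs_of_nonneg hnn]
      rw [habs, ofReal_integral_eq_lintegral_ofReal hIab
        (Filter.Eventually.of_forall fun t => hφ t)]
    · -- RHS infinite
      have : ∫⁻ t in Ioc a b, ENNReal.ofReal (φ t) = ⊤ := by
        by_contra h
        apply hIab
        refine ⟨(hφm.aestronglyMeasurable).restrict, ?_⟩
        rw [hasFiniteIntegral_iff_ofReal (Filter.Eventually.of_forall fun t => hφ t)]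
        exact lt_top_iff_ne_top.2 h
      simp [this]
  · -- junk case: both ψ a and ψ b are 0
    have hIb : ¬ IntegrableOn φ (Ioc 0 b) volume := fun h =>
      hIa (h.mono_set (Set.Ioc_subset_Ioc_right hab))
    have hpa : ψ a = 0 := by
      rw [hψ]; exact intervalIntegral.integral_undef (by
        rwa [intervalIntegrable_iff_integrableOn_Ioc_of_le ha])
    have hpb : ψ b = 0 := by
      rw [hψ]; exact intervalIntegral.integral_undef (by
        rwa [intervalIntegrable_iff_integrableOn_Ioc_of_le (ha.trans hab)])
    simp [hpa, hpb]

lemma key_pt (φ : ℝ → ℝ) (hφm : Measurable φ) (hφ : ∀ x, 0 ≤ φ x)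
    (ψ : ℝ → ℝ) (hψ : ∀ x, ψ x = ∫ t in (0:ℝ)..x, φ t)
    (a b : ℝ) (ha : 0 ≤ a) (hb : 0 ≤ b) :
    ENNReal.ofReal |ψ a - ψ b| ≤
      ∫⁻ t in Ioi (0:ℝ), (Ico (min a b) (max a b)).indicator
        (fun t => ENNReal.ofReal (φ t)) t := by
  have main : ∀ a b : ℝ, 0 ≤ a → a ≤ b →
      ENNReal.ofReal |ψ a - ψ b| ≤
      ∫⁻ t in Ioi (0:ℝ), (Ico a b).indicator (fun t => ENNReal.ofReal (φ t)) t := by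
    intro a b ha hab
    rw [lintegral_indicator measurableSet_Ico _, Measure.restrict_restrict measurableSet_Ico]
    have hset : (Ico a b ∩ Ioi 0 : Set ℝ) =ᵐ[volume] (Ioc a b : Set ℝ) := by
      rw [MeasureTheory.ae_eq_set]
      constructor
      · refine measure_mono_null (fun t ht => ?_) (measure_singleton a)
        obtain ⟨⟨hico, hio⟩, hnioc⟩ := ht
        rw [mem_Ico] at hico
        have hna : ¬ (a < t) := fun hlt => hnioc ⟨hlt, hico.2.le⟩
        exact le_antisymm (not_lt.1 hna) hico.1
      · refine measure_mono_null (fun t ht => ?_) (measure_singleton b)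
        obtain ⟨hioc, hn⟩ := ht
        rw [mem_Ioc] at hioc
        have ht0 : t ∈ Ioi (0:ℝ) := lt_of_le_of_lt ha hioc.1
        have h1 : ¬ t ∈ Ico a b := fun h => hn ⟨h, ht0⟩
        rw [mem_Ico] at h1
        have h2 : ¬ t < b := fun h => h1 ⟨hioc.1.le, h⟩
        exact le_antisymm hioc.2 (not_lt.1 h2)
    rw [setLIntegral_congr hset]
    exact key_aux φ hφm hφ ψ hψ a b ha hab
  rcases le_total a b with h | h
  · rw [min_eq_left h, max_eq_right h]; exact main a b ha h
  · rw [min_eq_right h, max_eq_left h, abs_sub_comm]; exact main b a hb h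

open ProbabilityTheory
open scoped ENNReal

theorem two_wcre_ge_mean_abs_diff
    {Ω : Type*} [MeasureSpace Ω] [IsProbabilityMeasure (ℙ : Measure Ω)]
    (X Y : Ω → ℝ) (hX : Measurable X) (hY : Measurable Y)
    (hXpos : ∀ ω, 0 ≤ X ω) (hYpos : ∀ ω, 0 ≤ Y ω)
    (hindep : IndepFun X Y ℙ)
    (hident : Measure.map X ℙ = Measure.map Y ℙ)
    (Fbar : ℝ → ℝ) (hFbar : ∀ x, Fbar x = (ℙ {ω | x < X ω}).toReal)
    (φ : ℝ → ℝ) (hφm : Measurable φ) (hφ : ∀ x, 0 ≤ φ x)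
    (ψ : ℝ → ℝ) (hψ : ∀ x, ψ x = ∫ t in (0:ℝ)..x, φ t)
    (hwcre : IntegrableOn (fun x => φ x * Fbar x * |Real.log (Fbar x)|) (Ioi (0:ℝ)))
    (hI1 : Integrable (fun ω => |ψ (X ω) - ψ (Y ω)|) ℙ)
    (hI2 : Integrable (fun ω => ψ (X ω)) ℙ) :
    (∫ ω, |ψ (X ω) - ψ (Y ω)| ∂(ℙ : Measure Ω))
        ≤ 2 * ∫ x in Ioi (0:ℝ), φ x * Fbar x * |Real.log (Fbar x)| ∧
    (∫ ω, |ψ (X ω) - ∫ ω', ψ (X ω') ∂(ℙ : Measure Ω)| ∂(ℙ : Measure Ω))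
        ≤ 2 * ∫ x in Ioi (0:ℝ), φ x * Fbar x * |Real.log (Fbar x)| := by
  have hFnn : ∀ x, 0 ≤ Fbar x := fun x => by rw [hFbar]; exact ENNReal.toReal_nonneg
  have hF1 : ∀ x, Fbar x ≤ 1 := fun x => by
    rw [hFbar]
    exact ENNReal.toReal_le_of_le_ofReal zero_le_one (by simpa using prob_le_one)
  have hInn : (0:ℝ) ≤ ∫ x in Ioi (0:ℝ), φ x * Fbar x * |Real.log (Fbar x)| :=
    setIntegral_nonneg measurableSet_Ioi fun x _ =>
      mul_nonneg (mul_nonneg (hφ x) (hFnn x)) (abs_nonneg _)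
  -- probability of the in-between event
  have hPE : ∀ t : ℝ, ℙ {ω | min (X ω) (Y ω) ≤ t ∧ t < max (X ω) (Y ω)}
      = ENNReal.ofReal (2 * (Fbar t * (1 - Fbar t))) := by
    intro t
    set p := ℙ (X ⁻¹' Ioi t) with hp
    set q := ℙ (X ⁻¹' Iic t) with hq
    have hpY : ℙ (Y ⁻¹' Ioi t) = p := by
      rw [hp, ← Measure.map_apply hY measurableSet_Ioi, ← hident,
        Measure.map_apply hX measurableSet_Ioi]
    have hqY : ℙ (Y ⁻¹' Iic t) = q := by
      rw [hq, ← Measure.map_apply hY measurableSet_Iic, ← hident,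
        Measure.map_apply hX measurableSet_Iic]
    have hB : ℙ (X ⁻¹' Ioi t ∩ Y ⁻¹' Ioi t) = p * p := by
      rw [hindep.measure_inter_preimage_eq_mul _ _ measurableSet_Ioi measurableSet_Ioi, hpY]
    have hA : ℙ (X ⁻¹' Iic t ∩ Y ⁻¹' Iic t) = q * q := by
      rw [hindep.measure_inter_preimage_eq_mul _ _ measurableSet_Iic measurableSet_Iic, hqY]
    have hAmeas : MeasurableSet (X ⁻¹' Iic t ∩ Y ⁻¹' Iic t) :=
      (hX measurableSet_Iic).inter (hY measurableSet_Iic)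
    have hBmeas : MeasurableSet (X ⁻¹' Ioi t ∩ Y ⁻¹' Ioi t) :=
      (hX measurableSet_Ioi).inter (hY measurableSet_Ioi)
    have hEeq : {ω | min (X ω) (Y ω) ≤ t ∧ t < max (X ω) (Y ω)}
        = (X ⁻¹' Iic t ∩ Y ⁻¹' Iic t)ᶜ \ (X ⁻¹' Ioi t ∩ Y ⁻¹' Ioi t) := by
      ext ω
      simp only [mem_setOf_eq, min_le_iff, lt_max_iff, mem_diff, mem_compl_iff, mem_inter_iff,
        mem_preimage, mem_Iic, mem_Ioi, not_and_or, not_le, not_lt]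
      tauto
    have hsub : (X ⁻¹' Ioi t ∩ Y ⁻¹' Ioi t) ⊆ (X ⁻¹' Iic t ∩ Y ⁻¹' Iic t)ᶜ := by
      intro ω hω
      simp only [mem_compl_iff, mem_inter_iff, mem_preimage, mem_Iic, mem_Ioi, not_and_or,
        not_le] at *
      exact Or.inl hω.1
    have hqp : q = 1 - p := by
      have hcc : X ⁻¹' Iic t = (X ⁻¹' Ioi t)ᶜ := by
        rw [← Set.preimage_compl, compl_Ioi]
      rw [hq, hcc, prob_compl_eq_one_sub (hX measurableSet_Ioi)]
    have hu : p.toReal = Fbar t := by rw [hFbar]; rfl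
    have hp1 : p ≤ 1 := prob_le_one
    have hqq1 : q * q ≤ 1 := mul_le_one' prob_le_one prob_le_one
    rw [hEeq, measure_diff hsub hBmeas.nullMeasurableSet (measure_ne_top _ _),
      prob_compl_eq_one_sub hAmeas, hA, hB]
    have hfin : (1 : ℝ≥0∞) - q * q ≠ ⊤ :=
      (tsub_le_self.trans_lt ENNReal.one_lt_top).ne
    rw [← ENNReal.ofReal_toReal (a := 1 - q * q - p * p)
      (((tsub_le_self.trans tsub_le_self).trans_lt ENNReal.one_lt_top).ne)]
    congr 1
    have hple : p * p ≤ 1 - q * q := by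
      refine ENNReal.le_sub_of_add_le_right (hqq1.trans_lt ENNReal.one_lt_top).ne ?_
      have h1 : p * p ≤ p := by calc p * p ≤ p * 1 := mul_le_mul_right hp1 p
                                   _ = p := mul_one p
      have h2 : q * q ≤ q := by calc q * q ≤ q * 1 := mul_le_mul_right prob_le_one q
                                   _ = q := mul_one q
      calc p * p + q * q ≤ p + q := add_le_add h1 h2
        _ = 1 := by rw [hqp, add_comm, tsub_add_cancel_of_le hp1]
    rw [ENNReal.toReal_sub_of_le hple hfin, ENNReal.toReal_sub_of_le hqq1 ENNReal.one_ne_top,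
      ENNReal.toReal_mul, ENNReal.toReal_mul, ENNReal.toReal_one, hu]
    have hqr : q.toReal = 1 - Fbar t := by
      rw [hqp, ENNReal.toReal_sub_of_le hp1 ENNReal.one_ne_top, ENNReal.toReal_one, hu]
    rw [hqr]; ring
  have hEmeas : ∀ t : ℝ, MeasurableSet {ω | min (X ω) (Y ω) ≤ t ∧ t < max (X ω) (Y ω)} :=
    fun t => (measurableSet_le (hX.min hY) measurable_const).inter
      (measurableSet_lt measurable_const (hX.max hY))
  -- the kernel
  have hFm : Measurable (fun pr : Ω × ℝ =>
      (Ico (min (X pr.1) (Y pr.1)) (max (X pr.1) (Y pr.1))).indicator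
        (fun s => ENNReal.ofReal (φ s)) pr.2) := by
    have hS : MeasurableSet {pr : Ω × ℝ |
        min (X pr.1) (Y pr.1) ≤ pr.2 ∧ pr.2 < max (X pr.1) (Y pr.1)} :=
      (measurableSet_le ((hX.min hY).comp measurable_fst) measurable_snd).inter
        (measurableSet_lt measurable_snd ((hX.max hY).comp measurable_fst))
    have heq : (fun pr : Ω × ℝ =>
        (Ico (min (X pr.1) (Y pr.1)) (max (X pr.1) (Y pr.1))).indicator
          (fun s => ENNReal.ofReal (φ s)) pr.2)
        = Set.indicator {pr : Ω × ℝ |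
            min (X pr.1) (Y pr.1) ≤ pr.2 ∧ pr.2 < max (X pr.1) (Y pr.1)}
          (fun pr => ENNReal.ofReal (φ pr.2)) := by
      funext pr
      simp only [Set.indicator_apply, mem_Ico, mem_setOf_eq]
    rw [heq]
    exact (ENNReal.measurable_ofReal.comp (hφm.comp measurable_snd)).indicator hS
  have hswap : (∫⁻ ω, (∫⁻ t in Ioi (0:ℝ),
        (Ico (min (X ω) (Y ω)) (max (X ω) (Y ω))).indicator
          (fun s => ENNReal.ofReal (φ s)) t) ∂ℙ)
      = ∫⁻ t in Ioi (0:ℝ), (∫⁻ ω,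
        (Ico (min (X ω) (Y ω)) (max (X ω) (Y ω))).indicator
          (fun s => ENNReal.ofReal (φ s)) t ∂ℙ) :=
    lintegral_lintegral_swap hFm.aemeasurable
  have hinner : ∀ t : ℝ, (∫⁻ ω,
        (Ico (min (X ω) (Y ω)) (max (X ω) (Y ω))).indicator
          (fun s => ENNReal.ofReal (φ s)) t ∂ℙ)
      = ENNReal.ofReal (φ t) * ℙ {ω | min (X ω) (Y ω) ≤ t ∧ t < max (X ω) (Y ω)} := by
    intro t
    have heq : (fun ω => (Ico (min (X ω) (Y ω)) (max (X ω) (Y ω))).indicator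
          (fun s => ENNReal.ofReal (φ s)) t)
        = Set.indicator {ω | min (X ω) (Y ω) ≤ t ∧ t < max (X ω) (Y ω)}
          (fun _ => ENNReal.ofReal (φ t)) := by
      funext ω
      simp only [Set.indicator_apply, mem_Ico, mem_setOf_eq]
    rw [heq, lintegral_indicator (hEmeas t), setLIntegral_const]
  have hfin2 : (∫⁻ t in Ioi (0:ℝ),
        ENNReal.ofReal (2 * (φ t * Fbar t * |Real.log (Fbar t)|)))
      = ENNReal.ofReal (2 * ∫ x in Ioi (0:ℝ), φ x * Fbar x * |Real.log (Fbar x)|) := by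
    rw [← integral_const_mul]
    exact (ofReal_integral_eq_lintegral_ofReal (hwcre.const_mul 2)
      (Filter.Eventually.of_forall fun t => by
        simp only [Pi.zero_apply]
        have h := mul_nonneg (mul_nonneg (hφ t) (hFnn t)) (abs_nonneg (Real.log (Fbar t)))
        linarith)).symm
  have part1 : (∫ ω, |ψ (X ω) - ψ (Y ω)| ∂(ℙ : Measure Ω))
      ≤ 2 * ∫ x in Ioi (0:ℝ), φ x * Fbar x * |Real.log (Fbar x)| := by
    rw [integral_eq_lintegral_of_nonneg_ae (Filter.Eventually.of_forall fun ω => abs_nonneg _)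
      hI1.aestronglyMeasurable]
    refine ENNReal.toReal_le_of_le_ofReal (mul_nonneg (by norm_num) hInn) ?_
    calc (∫⁻ ω, ENNReal.ofReal |ψ (X ω) - ψ (Y ω)| ∂ℙ)
        ≤ ∫⁻ ω, (∫⁻ t in Ioi (0:ℝ),
            (Ico (min (X ω) (Y ω)) (max (X ω) (Y ω))).indicator
              (fun s => ENNReal.ofReal (φ s)) t) ∂ℙ :=
          lintegral_mono fun ω => key_pt φ hφm hφ ψ hψ _ _ (hXpos ω) (hYpos ω)
      _ = ∫⁻ t in Ioi (0:ℝ), (∫⁻ ω,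
            (Ico (min (X ω) (Y ω)) (max (X ω) (Y ω))).indicator
              (fun s => ENNReal.ofReal (φ s)) t ∂ℙ) := hswap
      _ = ∫⁻ t in Ioi (0:ℝ), ENNReal.ofReal (φ t)
            * ENNReal.ofReal (2 * (Fbar t * (1 - Fbar t))) := by
          refine lintegral_congr fun t => ?_
          rw [hinner t, hPE t]
      _ ≤ ∫⁻ t in Ioi (0:ℝ),
            ENNReal.ofReal (2 * (φ t * Fbar t * |Real.log (Fbar t)|)) := by
          refine lintegral_mono fun t => ?_
          rw [← ENNReal.ofReal_mul (hφ t)]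
          refine ENNReal.ofReal_le_ofReal ?_
          have hl := mylog (Fbar t) (hFnn t) (hF1 t)
          nlinarith [hφ t]
      _ = ENNReal.ofReal (2 * ∫ x in Ioi (0:ℝ), φ x * Fbar x * |Real.log (Fbar x)|) := hfin2
  refine ⟨part1, ?_⟩
  -- Part 2
  classical
  set g : ℝ → ℝ := fun x => ∫ t, (Ioc (0:ℝ) x).indicator φ t with hgdef
  have hg_sm : StronglyMeasurable g := by
    have hS : MeasurableSet {pr : ℝ × ℝ | 0 < pr.2 ∧ pr.2 ≤ pr.1} :=
      (measurableSet_lt measurable_const measurable_snd).inter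
        (measurableSet_le measurable_snd measurable_fst)
    have hf : StronglyMeasurable (fun pr : ℝ × ℝ => (Ioc (0:ℝ) pr.1).indicator φ pr.2) := by
      have heq : (fun pr : ℝ × ℝ => (Ioc (0:ℝ) pr.1).indicator φ pr.2)
          = Set.indicator {pr : ℝ × ℝ | 0 < pr.2 ∧ pr.2 ≤ pr.1} (fun pr => φ pr.2) := by
        funext pr
        simp only [Set.indicator_apply, mem_Ioc, mem_setOf_eq]
      rw [heq]
      exact ((hφm.comp measurable_snd).indicator hS).stronglyMeasurable
    exact hf.integral_prod_right'
  have hgm : Measurable g := hg_sm.measurable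
  have hgψ : ∀ x : ℝ, 0 ≤ x → g x = ψ x := by
    intro x hx
    rw [hψ, intervalIntegral.integral_of_le hx, hgdef]
    exact integral_indicator measurableSet_Ioc
  haveI : IsProbabilityMeasure (Measure.map X ℙ) := Measure.isProbabilityMeasure_map hX.aemeasurable
  set μ := Measure.map X ℙ with hμdef
  have hmap : Measure.map (fun ω => (X ω, Y ω)) ℙ = μ.prod μ := by
    rw [(indepFun_iff_map_prod_eq_prod_map_map hX.aemeasurable hY.aemeasurable).1 hindep,
      ← hident]
  have hgint : Integrable g μ := by
    rw [hμdef, integrable_map_measure hg_sm.aestronglyMeasurable hX.aemeasurable]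
    have heq : g ∘ X = fun ω => ψ (X ω) := funext fun ω => hgψ _ (hXpos ω)
    rw [heq]; exact hI2
  set m := ∫ x, g x ∂μ with hmdef
  have hm : (∫ ω', ψ (X ω') ∂(ℙ : Measure Ω)) = m := by
    rw [hmdef, hμdef, integral_map hX.aemeasurable hg_sm.aestronglyMeasurable]
    exact integral_congr_ae (Filter.Eventually.of_forall fun ω => (hgψ _ (hXpos ω)).symm)
  have habs_sm : StronglyMeasurable (fun pr : ℝ × ℝ => |g pr.1 - g pr.2|) :=
    (((hgm.comp measurable_fst).sub (hgm.comp measurable_snd)).abs).stronglyMeasurable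
  have hFprod : Integrable (fun pr : ℝ × ℝ => |g pr.1 - g pr.2|) (μ.prod μ) := by
    rw [← hmap, integrable_map_measure habs_sm.aestronglyMeasurable
      ((hX.prodMk hY).aemeasurable)]
    have heq : (fun pr : ℝ × ℝ => |g pr.1 - g pr.2|) ∘ (fun ω => (X ω, Y ω))
        = fun ω => |ψ (X ω) - ψ (Y ω)| := by
      funext ω
      simp only [Function.comp_apply]
      rw [hgψ _ (hXpos ω), hgψ _ (hYpos ω)]
    rw [heq]; exact hI1
  have hmarg : Integrable (fun x => ∫ y, |g x - g y| ∂μ) μ := hFprod.integral_prod_left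
  have hpt : ∀ x : ℝ, |g x - m| ≤ ∫ y, |g x - g y| ∂μ := by
    intro x
    have h1 : g x - m = ∫ y, (g x - g y) ∂μ := by
      rw [integral_sub (integrable_const _) hgint, integral_const]
      simp
      exact hmdef
    rw [h1]
    simpa [Real.norm_eq_abs] using
      norm_integral_le_integral_norm (fun y => g x - g y) (μ := μ)
  have key2 : (∫ x, |g x - m| ∂μ) ≤ ∫ ω, |ψ (X ω) - ψ (Y ω)| ∂(ℙ : Measure Ω) := by
    calc (∫ x, |g x - m| ∂μ)
        ≤ ∫ x, (∫ y, |g x - g y| ∂μ) ∂μ :=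
          integral_mono (hgint.sub (integrable_const m)).abs hmarg hpt
      _ = ∫ pr, |g pr.1 - g pr.2| ∂(μ.prod μ) := integral_integral hFprod
      _ = ∫ ω, |g (X ω) - g (Y ω)| ∂(ℙ : Measure Ω) := by
          rw [← hmap, integral_map ((hX.prodMk hY).aemeasurable)
            habs_sm.aestronglyMeasurable]
      _ = ∫ ω, |ψ (X ω) - ψ (Y ω)| ∂(ℙ : Measure Ω) := by
          refine integral_congr_ae (Filter.Eventually.of_forall fun ω => ?_)
          show |g (X ω) - g (Y ω)| = |ψ (X ω) - ψ (Y ω)|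
          rw [hgψ _ (hXpos ω), hgψ _ (hYpos ω)]
  have hleft : (∫ ω, |ψ (X ω) - ∫ ω', ψ (X ω') ∂(ℙ : Measure Ω)| ∂(ℙ : Measure Ω))
      = ∫ x, |g x - m| ∂μ := by
    rw [hμdef, integral_map hX.aemeasurable (f := fun x => |g x - m|)
      ((hgm.sub measurable_const).abs).stronglyMeasurable.aestronglyMeasurable]
    refine integral_congr_ae (Filter.Eventually.of_forall fun ω => ?_)
    show |ψ (X ω) - ∫ ω', ψ (X ω') ∂(ℙ : Measure Ω)| = |g (X ω) - m|
    rw [hm, hgψ _ (hXpos ω)]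
  rw [hleft]
  exact key2.trans part1
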